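/- Let q ∈ C⁰[0,1] with q > 0 on (0,1), let f ∈ C¹[0,1] with f(0)=0 and h := f′, and let c ∈ ℝ. If z ∈ C¹(0,1) satisfies ż(φ) = h(φ) − c − q(φ)/z(φ) and z(φ) < 0 for all φ ∈ (0,1), then z can be extended continuously to [0,1]; moreover the limits z(0⁺) and z(1⁻) are finite and nonpositive. -/

import Mathlib

open Set Filter Topology MeasureTheory

noncomputable section

/-- a negative solution of ż = h − c − q/z on (0,1) extends
continuously to [0,1], with finite nonpositive limits at 0⁺ and 1⁻. -/
theorem stmt_3 (f h q z : ℝ → ℝ) (c : ℝ)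
    (hq_cont : ContinuousOn q (Icc 0 1))
    (hq_pos : ∀ φ ∈ Ioo (0:ℝ) 1, 0 < q φ)
    (hf0 : f 0 = 0)
    (hf' : ∀ x ∈ Icc (0:ℝ) 1, HasDerivWithinAt f (h x) (Icc 0 1) x)
    (hh_cont : ContinuousOn h (Icc 0 1))
    (hz_ode : ∀ φ ∈ Ioo (0:ℝ) 1, HasDerivAt z (h φ - c - q φ / z φ) φ)
    (hz_neg : ∀ φ ∈ Ioo (0:ℝ) 1, z φ < 0) :
    ∃ Z : ℝ → ℝ, ContinuousOn Z (Icc 0 1) ∧ EqOn Z z (Ioo 0 1) ∧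
      Tendsto z (𝓝[>] (0:ℝ)) (𝓝 (Z 0)) ∧ Tendsto z (𝓝[<] (1:ℝ)) (𝓝 (Z 1)) ∧
      Z 0 ≤ 0 ∧ Z 1 ≤ 0 := by
  -- bounds on h - c and q
  obtain ⟨M₀, hM₀⟩ := isCompact_Icc.exists_bound_of_continuousOn
      (f := fun x => h x - c) (hh_cont.sub continuousOn_const)
  obtain ⟨Q₀, hQ₀⟩ := isCompact_Icc.exists_bound_of_continuousOn hq_cont
  set M : ℝ := max M₀ 0 with hMdef
  have hM : ∀ x ∈ Icc (0:ℝ) 1, |h x - c| ≤ M := fun x hx => by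
    rw [← Real.norm_eq_abs]; exact le_trans (hM₀ x hx) (le_max_left _ _)
  have hM0 : (0:ℝ) ≤ M := le_max_right _ _
  set Q : ℝ := max Q₀ 0 with hQdef
  have hQ : ∀ x ∈ Icc (0:ℝ) 1, |q x| ≤ Q := fun x hx => by
    rw [← Real.norm_eq_abs]; exact le_trans (hQ₀ x hx) (le_max_left _ _)
  have hQ0 : (0:ℝ) ≤ Q := le_max_right _ _
  have hsub : Ioo (0:ℝ) 1 ⊆ Icc 0 1 := Ioo_subset_Icc_self
  -- derivative of g := z + M φ is nonnegative on (0,1)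
  set g : ℝ → ℝ := fun φ => z φ + M * φ with hgdef
  have hg' : ∀ φ ∈ Ioo (0:ℝ) 1, HasDerivAt g (h φ - c - q φ / z φ + M) φ := by
    intro φ hφ
    have : HasDerivAt (fun x => M * x) M φ := by
      simpa using (hasDerivAt_id φ).const_mul M
    exact (hz_ode φ hφ).add this
  have hderiv_nonneg : ∀ φ ∈ Ioo (0:ℝ) 1, 0 ≤ h φ - c - q φ / z φ + M := by
    intro φ hφ
    have h1 : -M ≤ h φ - c := (abs_le.mp (hM φ (hsub hφ))).1
    have h2 : q φ / z φ < 0 := div_neg_of_pos_of_neg (hq_pos φ hφ) (hz_neg φ hφ)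
    linarith
  have hgcont : ContinuousOn g (Ioo 0 1) := fun x hx =>
    ((hg' x hx).continuousAt).continuousWithinAt
  have hzcont : ContinuousOn z (Ioo 0 1) := fun x hx =>
    ((hz_ode x hx).continuousAt).continuousWithinAt
  have hmono : MonotoneOn g (Ioo (0:ℝ) 1) := by
    apply monotoneOn_of_hasDerivWithinAt_nonneg (convex_Ioo 0 1) hgcont
      (f' := fun φ => h φ - c - q φ / z φ + M)
    · intro x hx
      rw [interior_Ioo] at hx ⊢
      exact (hg' x hx).hasDerivWithinAt
    · intro x hx
      rw [interior_Ioo] at hx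
      exact hderiv_nonneg x hx
  -- g bounded above
  have hub : ∀ φ ∈ Ioo (0:ℝ) 1, g φ ≤ M := by
    intro φ hφ
    have := hz_neg φ hφ
    have h1 : M * φ ≤ M * 1 := by nlinarith [hφ.2]
    simp only [hgdef]; nlinarith
  -- g bounded below
  have hlb : ∃ B : ℝ, ∀ φ ∈ Ioo (0:ℝ) 1, B ≤ g φ := by
    by_cases hcase : ∀ δ ∈ Ioo (0:ℝ) 1, ∃ ψ ∈ Ioc (0:ℝ) δ, -1 < z ψ
    · refine ⟨-1, fun φ hφ => ?_⟩
      obtain ⟨ψ, hψ, hzψ⟩ := hcase φ hφ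
      have hψmem : ψ ∈ Ioo (0:ℝ) 1 := ⟨hψ.1, lt_of_le_of_lt hψ.2 hφ.2⟩
      have : g ψ ≤ g φ := hmono hψmem hφ hψ.2
      have hMψ : 0 ≤ M * ψ := mul_nonneg hM0 hψ.1.le
      simp only [hgdef] at this ⊢
      linarith
    · push_neg at hcase
      obtain ⟨δ, hδ, hδall⟩ := hcase
      -- on Ioc 0 δ, z ≤ -1 hence |z'| ≤ M + Q, so z is Lipschitz there
      have hIsub : Ioc (0:ℝ) δ ⊆ Ioo 0 1 := fun x hx => ⟨hx.1, lt_of_le_of_lt hx.2 hδ.2⟩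
      have hlip : ∀ x ∈ Ioc (0:ℝ) δ, ‖z x - z δ‖ ≤ (M + Q) * ‖x - δ‖ := by
        intro x hx
        refine Convex.norm_image_sub_le_of_norm_hasDerivWithin_le
          (f' := fun φ => h φ - c - q φ / z φ)
          (fun y hy => (hz_ode y (hIsub hy)).hasDerivWithinAt)
          (fun y hy => ?_) (convex_Ioc 0 δ) (right_mem_Ioc.mpr hδ.1) hx
        have h1 : |h y - c| ≤ M := hM y (hsub (hIsub hy))
        have h2 : |q y / z y| ≤ Q := by
          rw [abs_div]
          have hz1 : (1:ℝ) ≤ |z y| := by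
            have := hδall y hy
            rw [abs_of_neg (hz_neg y (hIsub hy))]
            linarith
          exact le_trans (div_le_self (abs_nonneg _) hz1) (hQ y (hsub (hIsub hy)))
        calc ‖h y - c - q y / z y‖ ≤ |h y - c| + |q y / z y| := abs_sub _ _
          _ ≤ M + Q := add_le_add h1 h2
      refine ⟨z δ - (M + Q), fun φ hφ => ?_⟩
      rcases le_or_gt φ δ with hle | hlt
      · have hx : φ ∈ Ioc (0:ℝ) δ := ⟨hφ.1, hle⟩
        have := hlip φ hx
        rw [Real.norm_eq_abs, Real.norm_eq_abs] at this
        have habs : |φ - δ| ≤ 1 := by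
          rw [abs_le]; constructor <;> nlinarith [hδ.1, hδ.2, hφ.1, hφ.2]
        have h1 : |z φ - z δ| ≤ M + Q := by nlinarith [abs_nonneg (z φ - z δ)]
        have h2 := (abs_le.mp h1).1
        have hMφ : 0 ≤ M * φ := mul_nonneg hM0 hφ.1.le
        simp only [hgdef]; linarith
      · have : g δ ≤ g φ := hmono hδ hφ hlt.le
        have hMδ : 0 ≤ M * δ := mul_nonneg hM0 hδ.1.le
        simp only [hgdef] at this ⊢
        linarith
  obtain ⟨B, hB⟩ := hlb
  have hne : (Ioo (0:ℝ) 1).Nonempty := ⟨1/2, by norm_num⟩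
  have hbdd_above : BddAbove (g '' Ioo 0 1) := by
    refine ⟨M, ?_⟩; rintro y ⟨x, hx, rfl⟩; exact hub x hx
  have hbdd_below : BddBelow (g '' Ioo 0 1) := by
    refine ⟨B, ?_⟩; rintro y ⟨x, hx, rfl⟩; exact hB x hx
  have tg0 : Tendsto g (𝓝[>] (0:ℝ)) (𝓝 (sInf (g '' Ioo 0 1))) :=
    MonotoneOn.tendsto_nhdsWithin_Ioo_right hne hmono hbdd_below
  have tg1 : Tendsto g (𝓝[<] (1:ℝ)) (𝓝 (sSup (g '' Ioo 0 1))) :=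
    MonotoneOn.tendsto_nhdsWithin_Ioo_left hne hmono hbdd_above
  -- convert to limits of z
  have hzg : ∀ φ, z φ = g φ - M * φ := by intro φ; simp [hgdef]
  have tz0 : Tendsto z (𝓝[>] (0:ℝ)) (𝓝 (sInf (g '' Ioo 0 1))) := by
    have tM : Tendsto (fun φ : ℝ => M * φ) (𝓝[>] (0:ℝ)) (𝓝 (M * 0)) :=
      ((continuous_const.mul continuous_id).tendsto 0).mono_left nhdsWithin_le_nhds
    have := tg0.sub tM
    simp only [mul_zero, sub_zero] at this
    exact this.congr (fun φ => (hzg φ).symm)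
  have tz1 : Tendsto z (𝓝[<] (1:ℝ)) (𝓝 (sSup (g '' Ioo 0 1) - M * 1)) := by
    have tM : Tendsto (fun φ : ℝ => M * φ) (𝓝[<] (1:ℝ)) (𝓝 (M * 1)) :=
      ((continuous_const.mul continuous_id).tendsto 1).mono_left nhdsWithin_le_nhds
    exact (tg1.sub tM).congr (fun φ => (hzg φ).symm)
  -- build the extension
  refine ⟨extendFrom (Ioo 0 1) z, ?_, ?_, ?_, ?_, ?_, ?_⟩
  · exact continuousOn_Icc_extendFrom_Ioo hzcont tz0 tz1
  · exact fun x hx => extendFrom_extends hzcont x hx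
  · rw [eq_lim_at_left_extendFrom_Ioo (by norm_num : (0:ℝ) < 1) tz0]; exact tz0
  · rw [eq_lim_at_right_extendFrom_Ioo (by norm_num : (0:ℝ) < 1) tz1]; exact tz1
  · rw [eq_lim_at_left_extendFrom_Ioo (by norm_num : (0:ℝ) < 1) tz0]
    refine le_of_tendsto tz0 ?_
    filter_upwards [Ioo_mem_nhdsGT_of_mem (by norm_num : (0:ℝ) ∈ Ico (0:ℝ) 1)] with x hx
    exact (hz_neg x hx).le
  · rw [eq_lim_at_right_extendFrom_Ioo (by norm_num : (0:ℝ) < 1) tz1]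
    refine le_of_tendsto tz1 ?_
    filter_upwards [Ioo_mem_nhdsLT_of_mem (by norm_num : (1:ℝ) ∈ Ioc (0:ℝ) 1)] with x hx
    exact (hz_neg x hx).le
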